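/- For any four real matrices R, S, T, U of compatible sizes, rk(ST) − rk(STU) − rk(RST) + rk(RSTU) equals the dimension of the subspace proj_{col T}(row S) ∩ proj_{null RS}(null (TU)ᵀ), where proj_Z Y denotes the orthogonal projection of the subspace Y onto the subspace Z. -/

import Mathlib

open Matrix

/-- The orthogonal projection of the subspace `Y` onto the subspace `Z`,
`proj_Z Y = Z ⊓ (Zᗮ ⊔ Y)`. -/
noncomputable def projSubspace {d : ℕ} (Z Y : Submodule ℝ (EuclideanSpace ℝ (Fin d))) :
    Submodule ℝ (EuclideanSpace ℝ (Fin d)) :=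
  Z ⊓ (Zᗮ ⊔ Y)

open Module

/-- Rank-nullity for the restriction of a linear map to a submodule. -/
lemma finrank_map_add_finrank_inf_ker {K V W : Type*} [Field K] [AddCommGroup V]
    [AddCommGroup W] [Module K V] [Module K W] [FiniteDimensional K V]
    (f : V →ₗ[K] W) (p : Submodule K V) :
    finrank K (p.map f) + finrank K (p ⊓ LinearMap.ker f : Submodule K V) = finrank K p := by
  have h := LinearMap.finrank_range_add_finrank_ker (f.domRestrict p)
  rw [LinearMap.range_domRestrict, LinearMap.ker_domRestrict] at h
  have e : ((LinearMap.ker f).comap p.subtype) ≃ₗ[K] (p ⊓ LinearMap.ker f : Submodule K V) := by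
    have h1 : (LinearMap.ker f).comap p.subtype
        = (p ⊓ LinearMap.ker f : Submodule K V).comap p.subtype := by
      rw [Submodule.comap_inf, Submodule.comap_subtype_self, top_inf_eq]
    rw [h1]
    exact Submodule.comapSubtypeEquivOfLe inf_le_left
  rw [e.finrank_eq] at h
  exact h

lemma ker_adjoint_eq {m n : Type*} [Fintype m] [Fintype n]
    (f : EuclideanSpace ℝ m →ₗ[ℝ] EuclideanSpace ℝ n) :
    LinearMap.ker (LinearMap.adjoint f) = (LinearMap.range f)ᗮ := by
  ext x
  simp only [LinearMap.mem_ker, Submodule.mem_orthogonal]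
  constructor
  · rintro h u ⟨y, rfl⟩
    rw [real_inner_comm, ← LinearMap.adjoint_inner_left, h, inner_zero_left]
  · intro h
    have h2 : inner ℝ ((LinearMap.adjoint f) x) ((LinearMap.adjoint f) x) = (0 : ℝ) := by
      rw [LinearMap.adjoint_inner_left, real_inner_comm]
      exact h _ ⟨_, rfl⟩
    exact inner_self_eq_zero.mp h2

lemma range_adjoint_eq {m n : Type*} [Fintype m] [Fintype n]
    (f : EuclideanSpace ℝ m →ₗ[ℝ] EuclideanSpace ℝ n) :
    LinearMap.range (LinearMap.adjoint f) = (LinearMap.ker f)ᗮ := by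
  have h : LinearMap.ker f = (LinearMap.range (LinearMap.adjoint f))ᗮ := by
    rw [← ker_adjoint_eq, LinearMap.adjoint_adjoint]
  rw [h, Submodule.orthogonal_orthogonal]

/-- Orthogonal complement turns intersections into sums (finite dimensions). -/
lemma orthogonal_inf {E : Type*} [NormedAddCommGroup E] [InnerProductSpace ℝ E]
    [FiniteDimensional ℝ E] (p q : Submodule ℝ E) : (p ⊓ q)ᗮ = pᗮ ⊔ qᗮ := by
  have h : (pᗮ ⊔ qᗮ)ᗮ = p ⊓ q := by
    rw [← Submodule.inf_orthogonal, Submodule.orthogonal_orthogonal,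
      Submodule.orthogonal_orthogonal]
  rw [← h, Submodule.orthogonal_orthogonal]

lemma rank_eq_finrank_range_toEuclideanLin {m n : ℕ} (A : Matrix (Fin m) (Fin n) ℝ) :
    A.rank = finrank ℝ (LinearMap.range (Matrix.toEuclideanLin A)) :=
  A.rank_eq_finrank_range_toLin (PiLp.basisFun 2 ℝ (Fin m)) (PiLp.basisFun 2 ℝ (Fin n))

lemma toEuclideanLin_mul {l m n : ℕ} (A : Matrix (Fin l) (Fin m) ℝ)
    (B : Matrix (Fin m) (Fin n) ℝ) :
    Matrix.toEuclideanLin (A * B)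
      = (Matrix.toEuclideanLin A).comp (Matrix.toEuclideanLin B) :=
  Matrix.toLin_mul (PiLp.basisFun 2 ℝ (Fin n)) (PiLp.basisFun 2 ℝ (Fin m))
    (PiLp.basisFun 2 ℝ (Fin l)) A B

set_option maxHeartbeats 1000000 in
/-- The slack in the Frobenius rank inequality equals the dimension
of `proj_{col T}(row S) ∩ proj_{null RS}(null (TU)ᵀ)`. -/
theorem frobenius_rank_slack_eq_dim (a b c e f : ℕ)
    (R : Matrix (Fin a) (Fin b) ℝ) (S : Matrix (Fin b) (Fin c) ℝ)
    (T : Matrix (Fin c) (Fin e) ℝ) (U : Matrix (Fin e) (Fin f) ℝ) :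
    ((S * T).rank : ℤ) - ((S * T * U).rank : ℤ)
        - ((R * S * T).rank : ℤ) + ((R * S * T * U).rank : ℤ)
      = (Module.finrank ℝ
          ↥(projSubspace (LinearMap.range (Matrix.toEuclideanLin T))
              (LinearMap.range (Matrix.toEuclideanLin Sᵀ))
            ⊓ projSubspace (LinearMap.ker (Matrix.toEuclideanLin (R * S)))
                (LinearMap.ker (Matrix.toEuclideanLin (T * U)ᵀ))) : ℤ) := by
  classical
  set Sl := Matrix.toEuclideanLin S with hSl
  set RSl := Matrix.toEuclideanLin (R * S) with hRSl
  set A := LinearMap.range (Matrix.toEuclideanLin T) with hA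
  set M := LinearMap.range (Matrix.toEuclideanLin (T * U)) with hM
  set N := LinearMap.ker Sl with hN
  set K := LinearMap.ker RSl with hK
  -- inclusions
  have hMA : M ≤ A := by
    rw [hM, hA, toEuclideanLin_mul]
    exact LinearMap.range_comp_le_range _ _
  have hNK : N ≤ K := by
    rw [hN, hK, hRSl, toEuclideanLin_mul]
    exact LinearMap.ker_le_ker_comp _ _
  -- the four rank identities
  have e1 : (S * T).rank + finrank ℝ (A ⊓ N : Submodule ℝ _) = finrank ℝ A := by
    rw [rank_eq_finrank_range_toEuclideanLin, toEuclideanLin_mul, LinearMap.range_comp]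
    exact finrank_map_add_finrank_inf_ker Sl A
  have e2 : (S * T * U).rank + finrank ℝ (M ⊓ N : Submodule ℝ _) = finrank ℝ M := by
    rw [Matrix.mul_assoc, rank_eq_finrank_range_toEuclideanLin, toEuclideanLin_mul,
      LinearMap.range_comp]
    exact finrank_map_add_finrank_inf_ker Sl M
  have e3 : (R * S * T).rank + finrank ℝ (A ⊓ K : Submodule ℝ _) = finrank ℝ A := by
    rw [rank_eq_finrank_range_toEuclideanLin, toEuclideanLin_mul, LinearMap.range_comp]
    exact finrank_map_add_finrank_inf_ker RSl A
  have e4 : (R * S * T * U).rank + finrank ℝ (M ⊓ K : Submodule ℝ _) = finrank ℝ M := by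
    have h : R * S * T * U = R * S * (T * U) := Matrix.mul_assoc _ _ _
    rw [h, rank_eq_finrank_range_toEuclideanLin, toEuclideanLin_mul, LinearMap.range_comp]
    exact finrank_map_add_finrank_inf_ker RSl M
  -- identify the projections
  have hrowS : LinearMap.range (Matrix.toEuclideanLin Sᵀ) = Nᗮ := by
    rw [hN, hSl, ← S.conjTranspose_eq_transpose_of_trivial,
      Matrix.toEuclideanLin_conjTranspose_eq_adjoint]
    exact range_adjoint_eq _
  have hnullTU : LinearMap.ker (Matrix.toEuclideanLin (T * U)ᵀ) = Mᗮ := by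
    rw [hM, ← (T * U).conjTranspose_eq_transpose_of_trivial,
      Matrix.toEuclideanLin_conjTranspose_eq_adjoint]
    exact ker_adjoint_eq _
  -- the goal subspace is W ⊓ W'ᗮ
  set W : Submodule ℝ (EuclideanSpace ℝ (Fin c)) := A ⊓ K with hW
  set W' : Submodule ℝ (EuclideanSpace ℝ (Fin c)) := (M ⊓ K) ⊔ (A ⊓ N) with hW'
  have hW'W : W' ≤ W := by
    rw [hW', hW]
    exact sup_le (inf_le_inf_right K hMA) (inf_le_inf_left A hNK)
  have hX : projSubspace A (LinearMap.range (Matrix.toEuclideanLin Sᵀ))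
      ⊓ projSubspace K (LinearMap.ker (Matrix.toEuclideanLin (T * U)ᵀ))
      = W'ᗮ ⊓ W := by
    rw [hrowS, hnullTU, projSubspace, projSubspace]
    have hW'o : W'ᗮ = (Kᗮ ⊔ Mᗮ) ⊓ (Aᗮ ⊔ Nᗮ) := by
      rw [hW', ← Submodule.inf_orthogonal, orthogonal_inf, orthogonal_inf,
        sup_comm Mᗮ Kᗮ]
    rw [hW'o, hW]
    ac_rfl
  rw [hX]
  have h5 := Submodule.finrank_add_inf_finrank_orthogonal hW'W
  have h6 := Submodule.finrank_sup_add_finrank_inf_eq (M ⊓ K) (A ⊓ N)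
  have h7 : (M ⊓ K) ⊓ (A ⊓ N) = M ⊓ N := by
    apply le_antisymm
    · exact le_inf (inf_le_left.trans inf_le_left) (inf_le_right.trans inf_le_right)
    · exact le_inf (le_inf inf_le_left (inf_le_right.trans hNK))
        (le_inf (inf_le_left.trans hMA) inf_le_right)
  rw [h7, ← hW'] at h6
  omega
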